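/- For every integer n ≥ 1, the subgroup of GL(2,ℂ) generated by the matrices x = !![0,-1;1,0] and a = !![exp(πi/n),0;0,exp(-πi/n)] has order 4n and is isomorphic to the dicyclic group of order 4n, i.e. to the group with presentation ⟨a,x | a^{2n}=1, x² = aⁿ, x⁻¹ a x = a⁻¹⟩ (Mathlib's QuaternionGroup n). -/

import Mathlib

open Matrix

/-- For every integer `n ≥ 1`, the subgroup of `GL₂(ℂ)` generated by
`x = !![0,-1;1,0]` and `a = !![exp(πi/n),0;0,exp(-πi/n)]` has order `4n` and is
isomorphic to the dicyclic (generalised quaternion) group `QuaternionGroup n` of order `4n`. -/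
theorem closure_x_a_card_and_iso_quaternionGroup
    (n : ℕ) (hn : 1 ≤ n) (X A : GL (Fin 2) ℂ)
    (hX : (X : Matrix (Fin 2) (Fin 2) ℂ) = !![0, -1; 1, 0])
    (hA : (A : Matrix (Fin 2) (Fin 2) ℂ) =
      !![Complex.exp (Real.pi * Complex.I / n), 0;
         0, Complex.exp (-(Real.pi * Complex.I / n))]) :
    Nat.card (Subgroup.closure {X, A} : Subgroup (GL (Fin 2) ℂ)) = 4 * n ∧
      Nonempty ((Subgroup.closure {X, A} : Subgroup (GL (Fin 2) ℂ)) ≃* QuaternionGroup n) := by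
  haveI : NeZero n := ⟨by omega⟩
  haveI : NeZero (2 * n) := ⟨by omega⟩
  haveI : Fact (1 < 2 * n) := ⟨by omega⟩
  set θ : ℂ := Real.pi * Complex.I / n with hθ
  have hn0 : (n : ℂ) ≠ 0 := Nat.cast_ne_zero.mpr (by omega)
  have hnθ : (n : ℂ) * θ = Real.pi * Complex.I := by
    rw [hθ]; field_simp
  -- powers of A
  have hApow : ∀ k : ℕ, ((A ^ k : GL (Fin 2) ℂ) : Matrix (Fin 2) (Fin 2) ℂ)
      = !![Complex.exp (k * θ), 0; 0, Complex.exp (-(k * θ))] := by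
    intro k
    induction k with
    | zero => simp [Matrix.one_fin_two]
    | succ k ih =>
      rw [pow_succ, Units.val_mul, ih, hA, Matrix.mul_fin_two]
      have e1 : Complex.exp (k * θ) * Complex.exp θ = Complex.exp ((k+1 : ℕ) * θ) := by
        rw [← Complex.exp_add]; push_cast; ring_nf
      have e2 : Complex.exp (-(k * θ)) * Complex.exp (-θ) = Complex.exp (-((k+1 : ℕ) * θ)) := by
        rw [← Complex.exp_add]; push_cast; ring_nf
      rw [mul_zero, zero_mul, mul_zero, zero_mul, e1, e2]
      norm_num
  have hA2n : A ^ (2 * n) = 1 := by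
    apply Units.ext
    rw [hApow]
    have : ((2 * n : ℕ) : ℂ) * θ = 2 * Real.pi * Complex.I := by
      push_cast; rw [mul_assoc, hnθ]; ring
    rw [this]
    simp [Complex.exp_neg, Complex.exp_two_pi_mul_I, Matrix.one_fin_two]
  have hexp_n : Complex.exp ((n : ℕ) * θ) = -1 := by
    rw [hnθ, Complex.exp_pi_mul_I]
  have hXsq : X ^ 2 = A ^ n := by
    apply Units.ext
    rw [Units.val_pow_eq_pow_val, hX, hApow, pow_two, Matrix.mul_fin_two, hexp_n,
      Complex.exp_neg, hexp_n]
    norm_num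
  have hAXA : A * X * A = X := by
    apply Units.ext
    rw [Units.val_mul, Units.val_mul, hA, hX]
    simp [Matrix.mul_fin_two, ← Complex.exp_add]
  have hXAX : X * A = A⁻¹ * X :=
    eq_inv_mul_iff_mul_eq.mpr (by rw [← mul_assoc]; exact hAXA)
  have hconj : X * A * X⁻¹ = A⁻¹ := by
    rw [hXAX, mul_assoc, mul_inv_cancel, mul_one]
  have h1 : ∀ k : ℕ, X * A ^ k = (A ^ k)⁻¹ * X := by
    intro k
    have hc := (conj_pow (i := k) (a := X) (b := A))
    rw [hconj, inv_pow] at hc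
    rw [hc, mul_assoc, inv_mul_cancel, mul_one]
  have hordvd : orderOf A ∣ 2 * n := orderOf_dvd_of_pow_eq_one hA2n
  have hmod : ∀ s t : ℕ, s ≡ t [MOD 2 * n] → A ^ s = A ^ t := by
    intro s t h
    exact pow_eq_pow_iff_modEq.mpr (h.of_dvd hordvd)
  set pA : ZMod (2 * n) → GL (Fin 2) ℂ := fun i => A ^ i.val with hpA
  have pAadd : ∀ i j : ZMod (2 * n), pA (i + j) = pA i * pA j := by
    intro i j
    rw [hpA]
    dsimp only
    rw [← pow_add]
    apply hmod
    rw [ZMod.val_add]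
    exact Nat.mod_modEq _ _
  have pAzero : pA 0 = 1 := by simp [hpA]
  have pAinv : ∀ i : ZMod (2 * n), (pA i)⁻¹ = pA (-i) := by
    intro i
    apply inv_eq_of_mul_eq_one_right
    rw [← pAadd, add_neg_cancel, pAzero]
  have pAcast : ∀ k : ℕ, pA (k : ZMod (2 * n)) = A ^ k := by
    intro k
    apply hmod
    rw [ZMod.val_natCast]
    exact Nat.mod_modEq _ _
  have hswap' : ∀ i : ZMod (2 * n), X * pA i = (pA i)⁻¹ * X := fun i => h1 _
  have hswap : ∀ i : ZMod (2 * n), pA i * X = X * (pA i)⁻¹ := by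
    intro i
    have h := hswap' (-i)
    rw [← pAinv, inv_inv] at h
    exact h.symm
  -- the homomorphism
  set f : QuaternionGroup n → GL (Fin 2) ℂ := fun g =>
    match g with
    | .a i => pA i
    | .xa i => X * pA i with hf
  have hmul : ∀ g h : QuaternionGroup n, f (g * h) = f g * f h := by
    intro g h
    rcases g with i | i <;> rcases h with j | j
    · show pA (i + j) = pA i * pA j
      exact pAadd i j
    · show X * pA (j - i) = pA i * (X * pA j)
      rw [← mul_assoc, hswap, mul_assoc, pAinv, ← pAadd, ← sub_eq_neg_add]
    · show X * pA (i + j) = X * pA i * pA j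
      rw [mul_assoc, pAadd]
    · show pA ((n : ZMod (2 * n)) + j - i) = X * pA i * (X * pA j)
      rw [mul_assoc, ← mul_assoc (pA i), hswap, pAinv, mul_assoc X (pA (-i)),
        ← pAadd, ← mul_assoc, ← pow_two, hXsq, ← pAcast, ← pAadd]
      congr 1
      ring
  set F : QuaternionGroup n →* GL (Fin 2) ℂ := MonoidHom.mk' f hmul with hF
  -- injectivity
  have hfaith : ∀ k : ℕ, A ^ k = 1 → 2 * n ∣ k := by
    intro k hk
    have := congrArg Units.val hk
    rw [hApow, Units.val_one, Matrix.one_fin_two] at this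
    have h00 : Complex.exp (k * θ) = 1 := by
      have := congrFun (congrFun this 0) 0
      simpa using this
    rw [Complex.exp_eq_one_iff] at h00
    obtain ⟨m, hm⟩ := h00
    have hπ : (Real.pi : ℂ) ≠ 0 := Complex.ofReal_ne_zero.mpr Real.pi_ne_zero
    have hI : Complex.I ≠ 0 := Complex.I_ne_zero
    rw [hθ] at hm
    field_simp at hm
    have h2 : (k : ℂ) * (Real.pi * Complex.I) = 2 * n * m * (Real.pi * Complex.I) := by
      linear_combination (Real.pi * Complex.I) * hm
    have hk' : (k : ℂ) = 2 * n * m := mul_right_cancel₀ (mul_ne_zero hπ hI) h2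
    have hki : (k : ℤ) = 2 * n * m := by exact_mod_cast hk'
    have hd : ((2 * n : ℕ) : ℤ) ∣ (k : ℤ) := ⟨m, by push_cast; linarith⟩
    exact_mod_cast hd
  have horder : orderOf A = 2 * n :=
    Nat.dvd_antisymm hordvd (hfaith _ (pow_orderOf_eq_one A))
  have hpinj : ∀ s t : ℕ, s < 2 * n → t < 2 * n → A ^ s = A ^ t → s = t := by
    intro s t hs ht h
    have hmm := pow_eq_pow_iff_modEq.mp h
    rw [horder] at hmm
    rwa [Nat.ModEq, Nat.mod_eq_of_lt hs, Nat.mod_eq_of_lt ht] at hmm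
  have hvinj : ∀ i j : ZMod (2 * n), pA i = pA j → i = j := by
    intro i j h
    have := hpinj _ _ (ZMod.val_lt i) (ZMod.val_lt j) h
    exact ZMod.val_injective _ this
  have hax : ∀ i j : ZMod (2 * n), pA i ≠ X * pA j := by
    intro i j h
    have hv := congrArg Units.val h
    rw [Units.val_mul, hX] at hv
    have hv' : ((A ^ i.val : GL (Fin 2) ℂ) : Matrix (Fin 2) (Fin 2) ℂ)
        = !![0, -1; 1, 0] * ((A ^ j.val : GL (Fin 2) ℂ) : Matrix (Fin 2) (Fin 2) ℂ) := hv
    rw [hApow, hApow, Matrix.mul_fin_two] at hv'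
    have h00 := congrFun (congrFun hv' 0) 0
    simp at h00
  have hinj : Function.Injective F := by
    intro g h hgh
    rcases g with i | i <;> rcases h with j | j
    · exact congrArg QuaternionGroup.a (hvinj i j hgh)
    · exact absurd hgh (hax i j)
    · exact absurd hgh.symm (hax j i)
    · have : X * pA i = X * pA j := hgh
      exact congrArg QuaternionGroup.xa (hvinj i j (mul_left_cancel this))
  have hXmem : X ∈ F.range := ⟨QuaternionGroup.xa 0, by
    show X * pA 0 = X
    rw [pAzero, mul_one]⟩
  have hAmem : A ∈ F.range := ⟨QuaternionGroup.a 1, by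
    show pA 1 = A
    rw [show (1 : ZMod (2 * n)) = ((1 : ℕ) : ZMod (2 * n)) by norm_num, pAcast, pow_one]⟩
  have hrange : Subgroup.closure {X, A} = F.range := by
    apply le_antisymm
    · rw [Subgroup.closure_le]
      rintro g (rfl | rfl)
      · exact hXmem
      · exact hAmem
    · rintro g hg
      obtain ⟨x, rfl⟩ := hg
      have hAc : A ∈ Subgroup.closure ({X, A} : Set (GL (Fin 2) ℂ)) :=
        Subgroup.subset_closure (Set.mem_insert_of_mem _ rfl)
      have hXc : X ∈ Subgroup.closure ({X, A} : Set (GL (Fin 2) ℂ)) :=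
        Subgroup.subset_closure (Set.mem_insert _ _)
      rcases x with i | i
      · exact pow_mem hAc _
      · exact mul_mem hXc (pow_mem hAc _)
  have e1 : QuaternionGroup n ≃* F.range := MonoidHom.ofInjective hinj
  have e2 : (Subgroup.closure {X, A} : Subgroup (GL (Fin 2) ℂ)) ≃* F.range :=
    MulEquiv.subgroupCongr hrange
  have iso := e2.trans e1.symm
  constructor
  · rw [Nat.card_congr iso.toEquiv, Nat.card_eq_fintype_card, QuaternionGroup.card]
  · exact ⟨iso⟩
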